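/- Let k be a perfect field of characteristic p and let A_n = k[[T_n]] for n ≥ 0, with injective k-algebra transition maps A_n → A_{n+1} determined by T_n ↦ (1+T_{n+1})^p − 1. Then the Frobenius endomorphism φ(x) = x^p on the colimit A_∞ = colim_n A_n is surjective. -/

import Mathlib

/-!
STATEMENT 7: k a perfect field of characteristic p, A_n = k[[T_n]] with transition maps
A_n → A_{n+1}, T_n ↦ (1+T_{n+1})^p − 1.  The Frobenius on colim_n A_n is surjective;
equivalently (and this is the precise content), every element of A_n becomes a p-th
power in A_{n+1}: for the transition map τ, every f satisfies τ f = g^p for some g.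
-/

open PowerSeries

theorem ordinary_colimit_frobenius_surjective
    (p : ℕ) [Fact p.Prime] (k : Type) [Field k] [CharP k p] [PerfectRing k p]
    -- τ : A_n → A_{n+1} is the k-algebra map with T_n ↦ (1+T_{n+1})^p − 1
    (τ : PowerSeries k →+* PowerSeries k)
    (hτX : τ PowerSeries.X = (1 + PowerSeries.X) ^ p - 1)
    (hτC : ∀ a : k, τ (PowerSeries.C a) = PowerSeries.C a)
    -- τ is continuous for the T-adic topology (it is a map of complete local rings)
    (hcont : ∀ m : ℕ, ∃ N : ℕ, ∀ g : PowerSeries k,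
      PowerSeries.X ^ N ∣ g → PowerSeries.X ^ m ∣ τ g) :
    -- every element of A_n is a p-th power in A_{n+1}; hence Frobenius is
    -- surjective on colim_n A_n
    ∀ f : PowerSeries k, ∃ g : PowerSeries k, τ f = g ^ p := by
  haveI : CharP (PowerSeries k) p :=
    charP_of_injective_ringHom (f := (C : k →+* PowerSeries k)) (fun a b h => by
      simpa using congrArg (coeff 0) h) p
  have hp1 : 1 ≤ p := (Fact.out : p.Prime).one_lt.le
  set e : k →+* k := ((frobeniusEquiv k p).symm : k ≃+* k).toRingHom with he
  set F : PowerSeries k →+* PowerSeries k :=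
    (frobenius (PowerSeries k) p).comp (PowerSeries.map e) with hF
  -- τ X = X^p
  have hXp : τ PowerSeries.X = PowerSeries.X ^ p := by
    rw [hτX, add_pow_char, one_pow, add_sub_cancel_left]
  -- agreement on polynomials
  have hpoly : ∀ P : Polynomial k, τ (P : PowerSeries k) = F (P : PowerSeries k) := by
    have : τ.comp (Polynomial.coeToPowerSeries.ringHom (R := k))
        = F.comp (Polynomial.coeToPowerSeries.ringHom (R := k)) := by
      apply Polynomial.ringHom_ext
      · intro a
        simp only [RingHom.comp_apply, Polynomial.coeToPowerSeries.ringHom_apply,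
          Polynomial.coe_C, hτC, hF, he]
        rw [PowerSeries.map_C]
        show C a = frobenius _ p (C ((frobeniusEquiv k p).symm a))
        rw [frobenius_def, ← map_pow, ← frobenius_def, frobenius_apply_frobeniusEquiv_symm]
      · simp only [RingHom.comp_apply, Polynomial.coeToPowerSeries.ringHom_apply,
          Polynomial.coe_X, hXp, hF, he]
        rw [PowerSeries.map_X]
        rfl
    intro P
    exact congrFun (congrArg (↑·) this) P
  intro f
  refine ⟨PowerSeries.map e f, ?_⟩
  have : τ f = F f := by
    ext m
    obtain ⟨N, hN⟩ := hcont (m + 1)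
    set N' := max N (m + 1) with hN'
    have hdvd : PowerSeries.X ^ N' ∣ (f - (trunc N' f : PowerSeries k)) := by
      rw [X_pow_dvd_iff]
      intro j hj
      simp [Polynomial.coeff_coe, coeff_trunc, hj]
    have h1 : PowerSeries.X ^ (m + 1) ∣ τ (f - (trunc N' f : PowerSeries k)) :=
      hN _ (dvd_trans (pow_dvd_pow _ (le_max_left _ _)) hdvd)
    have h2 : PowerSeries.X ^ (m + 1) ∣ F (f - (trunc N' f : PowerSeries k)) := by
      obtain ⟨c, hc⟩ := hdvd
      refine dvd_trans (pow_dvd_pow (n := N' * p) PowerSeries.X ?_) ⟨(PowerSeries.map e c) ^ p, ?_⟩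
      · calc m + 1 ≤ N' := le_max_right _ _
          _ ≤ N' * p := Nat.le_mul_of_pos_right _ (Fact.out : p.Prime).pos
      · show (frobenius (PowerSeries k) p) ((PowerSeries.map e) (f - (trunc N' f : PowerSeries k))) = _
        rw [hc, map_mul, map_pow, PowerSeries.map_X, frobenius_def, mul_pow, ← pow_mul]

    have cz : ∀ d : PowerSeries k, PowerSeries.X ^ (m + 1) ∣ d → coeff m d = 0 := by
      intro d hd
      exact (X_pow_dvd_iff.mp hd) m (lt_add_one m)
    have e1 : coeff m (τ f) = coeff m (τ (trunc N' f : PowerSeries k)) := by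
      have h := cz _ h1
      rw [map_sub, map_sub, sub_eq_zero] at h
      exact h
    have e2 : coeff m (F f) = coeff m (F (trunc N' f : PowerSeries k)) := by
      have h := cz _ h2
      rw [map_sub, map_sub, sub_eq_zero] at h
      exact h
    rw [e1, e2, hpoly]
  rw [this, hF]
  show frobenius _ p (PowerSeries.map e f) = _
  rfl
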